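/- For every integer k ≥ 0, every integer d ≥ 2, every a > 0 and every ξ > 0, there exist real numbers α_{0,k}(ξ), …, α_{k,k}(ξ), depending only on k, d, a and ξ (and not on g), with α_{k,k}(ξ) ≠ 0, such that for every density generator g that is k-times differentiable in a neighborhood of ξ, the function ρ_a = z_a ∘ Ψ_a is k-times differentiable at ψ_a(ξ) and ρ_a^{(k)}(ψ_a(ξ)) = Σ_{i=0}^{k} α_{i,k}(ξ)·g^{(i)}(ξ). -/

import Mathlib

open Real Filter
open scoped ContDiff

/-- The transformation `ψ_a(ξ) = -a + (a^{d/2} + ξ^{d/2})^{2/d}`. -/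
noncomputable def psi (d : ℕ) (a : ℝ) (ξ : ℝ) : ℝ :=
  -a + (a ^ ((d : ℝ) / 2) + ξ ^ ((d : ℝ) / 2)) ^ (2 / (d : ℝ))

/-- The inverse transformation `Ψ_a(t) = ((t+a)^{d/2} - a^{d/2})^{2/d}`. -/
noncomputable def Psi (d : ℕ) (a : ℝ) (t : ℝ) : ℝ :=
  ((t + a) ^ ((d : ℝ) / 2) - a ^ ((d : ℝ) / 2)) ^ (2 / (d : ℝ))

/-- The normalized generator `g̃(ξ) = ξ^{(d-2)/2}·g(ξ)`. -/
noncomputable def gtilde (d : ℕ) (g : ℝ → ℝ) (ξ : ℝ) : ℝ :=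
  ξ ^ (((d : ℝ) - 2) / 2) * g ξ

/-- The function `z_a(ξ) = g̃(ξ)/ψ_a'(ξ)`. -/
noncomputable def za (d : ℕ) (a : ℝ) (g : ℝ → ℝ) (ξ : ℝ) : ℝ :=
  gtilde d g ξ / deriv (psi d a) ξ

/-- The function `ρ_a = z_a ∘ Ψ_a`. -/
noncomputable def rho (d : ℕ) (a : ℝ) (g : ℝ → ℝ) (t : ℝ) : ℝ :=
  za d a g (Psi d a t)


section Aux

variable {d : ℕ} {a : ℝ}

lemma hp_pos (hd : 2 ≤ d) : (0:ℝ) < (d:ℝ)/2 := by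
  have : (2:ℝ) ≤ (d:ℝ) := by exact_mod_cast hd
  linarith

lemma hq_pos (hd : 2 ≤ d) : (0:ℝ) < 2/(d:ℝ) := by
  have : (2:ℝ) ≤ (d:ℝ) := by exact_mod_cast hd
  positivity

lemma hpq (hd : 2 ≤ d) : ((d:ℝ)/2) * (2/(d:ℝ)) = 1 := by
  have : (d:ℝ) ≠ 0 := by
    have : (2:ℝ) ≤ (d:ℝ) := by exact_mod_cast hd
    linarith
  field_simp

lemma hqp (hd : 2 ≤ d) : (2/(d:ℝ)) * ((d:ℝ)/2) = 1 := by
  rw [mul_comm]; exact hpq hd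

/-- `ψ_a(ξ) > 0` for `ξ > 0`. -/
lemma psi_pos (hd : 2 ≤ d) (ha : 0 < a) {x : ℝ} (hx : 0 < x) : 0 < psi d a x := by
  have hA : 0 < a ^ ((d:ℝ)/2) := rpow_pos_of_pos ha _
  have hX : 0 < x ^ ((d:ℝ)/2) := rpow_pos_of_pos hx _
  have h1 : (a ^ ((d:ℝ)/2)) ^ (2/(d:ℝ)) < (a ^ ((d:ℝ)/2) + x ^ ((d:ℝ)/2)) ^ (2/(d:ℝ)) :=
    Real.rpow_lt_rpow (le_of_lt hA) (by linarith) (hq_pos hd)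
  have h2 : (a ^ ((d:ℝ)/2)) ^ (2/(d:ℝ)) = a := by
    rw [← Real.rpow_mul ha.le, hpq hd, Real.rpow_one]
  rw [h2] at h1
  unfold psi
  linarith

/-- `Ψ_a(ψ_a(x)) = x` for `x > 0`. -/
lemma Psi_psi (hd : 2 ≤ d) (ha : 0 < a) {x : ℝ} (hx : 0 < x) :
    Psi d a (psi d a x) = x := by
  have hA : 0 < a ^ ((d:ℝ)/2) := rpow_pos_of_pos ha _
  have hX : 0 < x ^ ((d:ℝ)/2) := rpow_pos_of_pos hx _
  have hsum : (0:ℝ) ≤ a ^ ((d:ℝ)/2) + x ^ ((d:ℝ)/2) := by linarith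
  have h1 : psi d a x + a = (a ^ ((d:ℝ)/2) + x ^ ((d:ℝ)/2)) ^ (2/(d:ℝ)) := by
    unfold psi; ring
  unfold Psi
  rw [h1, ← Real.rpow_mul hsum, hqp hd, Real.rpow_one, add_sub_cancel_left,
    ← Real.rpow_mul hx.le, hpq hd, Real.rpow_one]

/-- `Ψ_a(t) > 0` for `t > 0`. -/
lemma Psi_pos (hd : 2 ≤ d) (ha : 0 < a) {t : ℝ} (ht : 0 < t) : 0 < Psi d a t := by
  have h1 : a ^ ((d:ℝ)/2) < (t + a) ^ ((d:ℝ)/2) :=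
    Real.rpow_lt_rpow ha.le (by linarith) (hp_pos hd)
  exact rpow_pos_of_pos (by linarith) _

lemma inner_Psi_pos (hd : 2 ≤ d) (ha : 0 < a) {t : ℝ} (ht : 0 < t) :
    0 < (t + a) ^ ((d:ℝ)/2) - a ^ ((d:ℝ)/2) := by
  have h1 : a ^ ((d:ℝ)/2) < (t + a) ^ ((d:ℝ)/2) :=
    Real.rpow_lt_rpow ha.le (by linarith) (hp_pos hd)
  linarith

/-- `ψ_a` is smooth on `(0, ∞)`. -/
lemma contDiffAt_psi (hd : 2 ≤ d) (ha : 0 < a) {x : ℝ} (hx : 0 < x) :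
    ContDiffAt ℝ ∞ (psi d a) x := by
  have hA : 0 < a ^ ((d:ℝ)/2) := rpow_pos_of_pos ha _
  have hX : 0 < x ^ ((d:ℝ)/2) := rpow_pos_of_pos hx _
  have h1 : ContDiffAt ℝ ∞ (fun y : ℝ => a ^ ((d:ℝ)/2) + y ^ ((d:ℝ)/2)) x :=
    contDiffAt_const.add (Real.contDiffAt_rpow_const_of_ne hx.ne')
  have h2 : ContDiffAt ℝ ∞ (fun y : ℝ => y ^ (2/(d:ℝ)))
      (a ^ ((d:ℝ)/2) + x ^ ((d:ℝ)/2)) :=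
    Real.contDiffAt_rpow_const_of_ne (by positivity)
  have h3 := h2.comp x h1
  exact contDiffAt_const.add h3

lemma contDiffOn_psi (hd : 2 ≤ d) (ha : 0 < a) :
    ContDiffOn ℝ ∞ (psi d a) (Set.Ioi 0) := fun x hx =>
  (contDiffAt_psi hd ha hx).contDiffWithinAt

/-- `Ψ_a` is smooth on `(0, ∞)`. -/
lemma contDiffAt_Psi (hd : 2 ≤ d) (ha : 0 < a) {t : ℝ} (ht : 0 < t) :
    ContDiffAt ℝ ∞ (Psi d a) t := by
  have h1 : ContDiffAt ℝ ∞ (fun s : ℝ => (s + a) ^ ((d:ℝ)/2) - a ^ ((d:ℝ)/2)) t := by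
    have hin : ContDiffAt ℝ ∞ (fun s : ℝ => s + a) t := contDiffAt_id.add contDiffAt_const
    have hout : ContDiffAt ℝ ∞ (fun y : ℝ => y ^ ((d:ℝ)/2)) (t + a) :=
      Real.contDiffAt_rpow_const_of_ne (by positivity)
    exact (hout.comp t hin).sub contDiffAt_const
  have h2 : ContDiffAt ℝ ∞ (fun y : ℝ => y ^ (2/(d:ℝ)))
      ((t + a) ^ ((d:ℝ)/2) - a ^ ((d:ℝ)/2)) :=
    Real.contDiffAt_rpow_const_of_ne (inner_Psi_pos hd ha ht).ne'
  exact h2.comp t h1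

lemma contDiffOn_Psi (hd : 2 ≤ d) (ha : 0 < a) :
    ContDiffOn ℝ ∞ (Psi d a) (Set.Ioi 0) := fun t ht =>
  (contDiffAt_Psi hd ha ht).contDiffWithinAt

lemma top_add_one_le : (∞ : WithTop ℕ∞) + 1 ≤ ∞ := by
  exact le_of_eq rfl

lemma contDiffOn_deriv_psi (hd : 2 ≤ d) (ha : 0 < a) :
    ContDiffOn ℝ ∞ (deriv (psi d a)) (Set.Ioi 0) :=
  (contDiffOn_psi hd ha).deriv_of_isOpen isOpen_Ioi top_add_one_le

lemma contDiffOn_deriv_Psi (hd : 2 ≤ d) (ha : 0 < a) :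
    ContDiffOn ℝ ∞ (deriv (Psi d a)) (Set.Ioi 0) :=
  (contDiffOn_Psi hd ha).deriv_of_isOpen isOpen_Ioi top_add_one_le

/-- Explicit derivative of `ψ_a` at `x > 0`. -/
lemma hasDerivAt_psi (hd : 2 ≤ d) (ha : 0 < a) {x : ℝ} (hx : 0 < x) :
    HasDerivAt (psi d a)
      ((2/(d:ℝ)) * (a ^ ((d:ℝ)/2) + x ^ ((d:ℝ)/2)) ^ (2/(d:ℝ) - 1) *
        (((d:ℝ)/2) * x ^ ((d:ℝ)/2 - 1))) x := by
  have hA : 0 < a ^ ((d:ℝ)/2) := rpow_pos_of_pos ha _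
  have hX : 0 < x ^ ((d:ℝ)/2) := rpow_pos_of_pos hx _
  have h1 : HasDerivAt (fun y : ℝ => y ^ ((d:ℝ)/2)) (((d:ℝ)/2) * x ^ ((d:ℝ)/2 - 1)) x :=
    Real.hasDerivAt_rpow_const (Or.inl hx.ne')
  have h2 : HasDerivAt (fun y : ℝ => a ^ ((d:ℝ)/2) + y ^ ((d:ℝ)/2))
      (((d:ℝ)/2) * x ^ ((d:ℝ)/2 - 1)) x := h1.const_add _
  have h3 : HasDerivAt (fun y : ℝ => y ^ (2/(d:ℝ)))
      ((2/(d:ℝ)) * (a ^ ((d:ℝ)/2) + x ^ ((d:ℝ)/2)) ^ (2/(d:ℝ) - 1))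
      (a ^ ((d:ℝ)/2) + x ^ ((d:ℝ)/2)) :=
    Real.hasDerivAt_rpow_const (Or.inl (by positivity))
  have h4 := (h3.comp x h2).const_add (-a)
  exact h4

lemma deriv_psi_pos (hd : 2 ≤ d) (ha : 0 < a) {x : ℝ} (hx : 0 < x) :
    0 < deriv (psi d a) x := by
  rw [(hasDerivAt_psi hd ha hx).deriv]
  have hA : 0 < a ^ ((d:ℝ)/2) := rpow_pos_of_pos ha _
  have hX : 0 < x ^ ((d:ℝ)/2) := rpow_pos_of_pos hx _
  have h1 : (0:ℝ) < (a ^ ((d:ℝ)/2) + x ^ ((d:ℝ)/2)) ^ (2/(d:ℝ) - 1) :=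
    rpow_pos_of_pos (by linarith) _
  have h2 : (0:ℝ) < x ^ ((d:ℝ)/2 - 1) := rpow_pos_of_pos hx _
  have := hq_pos hd
  have := hp_pos hd
  positivity

/-- Explicit derivative of `Ψ_a` at `t > 0`. -/
lemma hasDerivAt_Psi (hd : 2 ≤ d) (ha : 0 < a) {t : ℝ} (ht : 0 < t) :
    HasDerivAt (Psi d a)
      ((2/(d:ℝ)) * ((t + a) ^ ((d:ℝ)/2) - a ^ ((d:ℝ)/2)) ^ (2/(d:ℝ) - 1) *
        (((d:ℝ)/2) * (t + a) ^ ((d:ℝ)/2 - 1))) t := by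
  have h1 : HasDerivAt (fun s : ℝ => s + a) 1 t := (hasDerivAt_id t).add_const a
  have h2 : HasDerivAt (fun y : ℝ => y ^ ((d:ℝ)/2))
      (((d:ℝ)/2) * (t + a) ^ ((d:ℝ)/2 - 1)) (t + a) :=
    Real.hasDerivAt_rpow_const (Or.inl (by positivity))
  have h3 : HasDerivAt (fun s : ℝ => (s + a) ^ ((d:ℝ)/2) - a ^ ((d:ℝ)/2))
      (((d:ℝ)/2) * (t + a) ^ ((d:ℝ)/2 - 1)) t := by
    have := (h2.comp t h1).sub_const (a ^ ((d:ℝ)/2))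
    simpa [Function.comp] using this
  have h4 : HasDerivAt (fun y : ℝ => y ^ (2/(d:ℝ)))
      ((2/(d:ℝ)) * ((t + a) ^ ((d:ℝ)/2) - a ^ ((d:ℝ)/2)) ^ (2/(d:ℝ) - 1))
      ((t + a) ^ ((d:ℝ)/2) - a ^ ((d:ℝ)/2)) :=
    Real.hasDerivAt_rpow_const (Or.inl (inner_Psi_pos hd ha ht).ne')
  have h5 := h4.comp t h3
  exact h5

lemma deriv_Psi_pos (hd : 2 ≤ d) (ha : 0 < a) {t : ℝ} (ht : 0 < t) :
    0 < deriv (Psi d a) t := by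
  rw [(hasDerivAt_Psi hd ha ht).deriv]
  have h1 : (0:ℝ) < ((t + a) ^ ((d:ℝ)/2) - a ^ ((d:ℝ)/2)) ^ (2/(d:ℝ) - 1) :=
    rpow_pos_of_pos (inner_Psi_pos hd ha ht) _
  have h2 : (0:ℝ) < (t + a) ^ ((d:ℝ)/2 - 1) := rpow_pos_of_pos (by linarith) _
  have := hq_pos hd
  have := hp_pos hd
  positivity

/-- `ρ` factors as `c · (g ∘ Ψ)`. -/
lemma rho_eq (d : ℕ) (a : ℝ) (g : ℝ → ℝ) (t : ℝ) :
    rho d a g t =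
      ((Psi d a t) ^ (((d:ℝ) - 2)/2) / deriv (psi d a) (Psi d a t)) * g (Psi d a t) := by
  unfold rho za gtilde
  rw [mul_div_right_comm]

end Aux

/-- Arithmetic identity for shifting a sum of products. -/
lemma sum_shift_aux (k : ℕ) (A B G : ℕ → ℝ) (hA : A (k+1) = 0) :
    ∑ i ∈ Finset.range (k+1), (A i * G i + B i * G (i+1))
      = ∑ i ∈ Finset.range (k+2), (A i + (if i = 0 then 0 else B (i-1))) * G i := by
  have h2 : ∑ i ∈ Finset.range (k+2), (A i + (if i = 0 then 0 else B (i-1))) * G i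
      = ∑ i ∈ Finset.range (k+2), A i * G i
        + ∑ i ∈ Finset.range (k+2), (if i = 0 then 0 else B (i-1)) * G i := by
    rw [← Finset.sum_add_distrib]
    exact Finset.sum_congr rfl fun i _ => by ring
  have h3 : ∑ i ∈ Finset.range (k+2), A i * G i
      = ∑ i ∈ Finset.range (k+1), A i * G i := by
    rw [Finset.sum_range_succ, hA, zero_mul, add_zero]
  have h4 : ∑ i ∈ Finset.range (k+2), (if i = 0 then 0 else B (i-1)) * G i
      = ∑ i ∈ Finset.range (k+1), B i * G (i+1) := by
    rw [Finset.sum_range_succ' (fun i => (if i = 0 then 0 else B (i-1)) * G i) (k+1)]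
    simp
  rw [h2, h3, h4, Finset.sum_add_distrib]

/-- The key inductive claim: coefficient functions for all derivatives of `ρ`. -/
lemma rho_claim (d : ℕ) (hd : 2 ≤ d) (a : ℝ) (ha : 0 < a) (ξ : ℝ) (hξ : 0 < ξ) (k : ℕ) :
    ∃ β : ℕ → ℝ → ℝ,
      (∀ i, ContDiffOn ℝ ∞ (β i) (Set.Ioi 0)) ∧
      (∀ i, k < i → β i = fun _ => 0) ∧
      β k (psi d a ξ) ≠ 0 ∧
      ∀ g : ℝ → ℝ,
        (∀ᶠ x in nhds ξ, ∀ i < k, DifferentiableAt ℝ (iteratedDeriv i g) x) →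
        ∀ᶠ t in nhds (psi d a ξ),
          (∀ i < k, DifferentiableAt ℝ (iteratedDeriv i (rho d a g)) t) ∧
          iteratedDeriv k (rho d a g) t =
            ∑ i ∈ Finset.range (k+1), β i t * iteratedDeriv i g (Psi d a t) := by
  induction k with
  | zero =>
    refine ⟨fun i => match i with
      | 0 => fun t => (Psi d a t) ^ (((d:ℝ) - 2)/2) / deriv (psi d a) (Psi d a t)
      | _+1 => fun _ => 0, ?_, ?_, ?_, ?_⟩
    · intro i
      match i with
      | Nat.succ j => exact contDiffOn_const
      | 0 =>
        intro t ht
        have ht' : (0:ℝ) < t := ht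
        have hΨt : 0 < Psi d a t := Psi_pos hd ha ht'
        have hΨ : ContDiffAt ℝ ∞ (Psi d a) t := contDiffAt_Psi hd ha ht'
        have hnum : ContDiffAt ℝ ∞ (fun s => (Psi d a s) ^ (((d:ℝ) - 2)/2)) t :=
          (Real.contDiffAt_rpow_const_of_ne hΨt.ne').comp t hΨ
        have hden : ContDiffAt ℝ ∞ (fun s => deriv (psi d a) (Psi d a s)) t := by
          have h1 : ContDiffAt ℝ ∞ (deriv (psi d a)) (Psi d a t) :=
            (contDiffOn_deriv_psi hd ha).contDiffAt (Ioi_mem_nhds hΨt)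
          exact h1.comp t hΨ
        exact ((hnum.div hden (deriv_psi_pos hd ha hΨt).ne').contDiffWithinAt)
    · intro i hi
      match i, hi with
      | Nat.succ j, _ => rfl
    · show Psi d a (psi d a ξ) ^ (((d:ℝ) - 2)/2) / deriv (psi d a) (Psi d a (psi d a ξ)) ≠ 0
      rw [Psi_psi hd ha hξ]
      have h1 : (0:ℝ) < ξ ^ (((d:ℝ) - 2)/2) := rpow_pos_of_pos hξ _
      exact div_ne_zero h1.ne' (deriv_psi_pos hd ha hξ).ne'
    · intro g _
      refine Filter.Eventually.of_forall fun t => ⟨by omega, ?_⟩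
      rw [iteratedDeriv_zero, Finset.sum_range_one, iteratedDeriv_zero]
      exact rho_eq d a g t
  | succ k ih =>
    obtain ⟨β, hsm, hz, hne, hmain⟩ := ih
    set t₀ := psi d a ξ with ht₀def
    have ht₀ : 0 < t₀ := psi_pos hd ha hξ
    refine ⟨fun i t => deriv (β i) t +
        (if i = 0 then 0 else β (i-1) t * deriv (Psi d a) t), ?_, ?_, ?_, ?_⟩
    · intro i
      have h1 : ContDiffOn ℝ ∞ (deriv (β i)) (Set.Ioi 0) :=
        (hsm i).deriv_of_isOpen isOpen_Ioi top_add_one_le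
      by_cases hi : i = 0
      · simpa [hi] using h1
      · simp only [if_neg hi]
        exact h1.add ((hsm (i-1)).mul (contDiffOn_deriv_Psi hd ha))
    · intro i hi
      have h1 : β i = fun _ => 0 := hz i (by omega)
      have h2 : β (i-1) = fun _ => 0 := hz (i-1) (by omega)
      funext t
      simp [h1, h2, (show i ≠ 0 by omega)]
    · have h1 : β (k+1) = fun _ => 0 := hz (k+1) (by omega)
      simp only [if_neg (Nat.succ_ne_zero k), Nat.add_sub_cancel, h1, deriv_const]
      simpa using mul_ne_zero hne (deriv_Psi_pos hd ha ht₀).ne'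
    · intro g hg
      have hg' : ∀ᶠ x in nhds ξ, ∀ i < k, DifferentiableAt ℝ (iteratedDeriv i g) x :=
        hg.mono fun x hx i hi => hx i (by omega)
      have H1 := hmain g hg'
      have hpos : ∀ᶠ t in nhds t₀, t ∈ Set.Ioi (0:ℝ) :=
        isOpen_Ioi.eventually_mem ht₀
      have hΨcont : ContinuousAt (Psi d a) t₀ := (contDiffAt_Psi hd ha ht₀).continuousAt
      have hΨt₀ : Psi d a t₀ = ξ := Psi_psi hd ha hξ
      have hpull : ∀ᶠ t in nhds t₀,
          ∀ i < k + 1, DifferentiableAt ℝ (iteratedDeriv i g) (Psi d a t) := by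
        have := hΨcont.tendsto
        rw [hΨt₀] at this
        exact this.eventually hg
      filter_upwards [H1, hpos, H1.eventually_nhds, hpull] with t hP ht hPn hgt
      have ht' : (0:ℝ) < t := ht
      -- the local model function
      set F : ℝ → ℝ := fun s =>
        ∑ i ∈ Finset.range (k+1), β i s * iteratedDeriv i g (Psi d a s) with hFdef
      have heq : iteratedDeriv k (rho d a g) =ᶠ[nhds t] F :=
        hPn.mono fun s hs => hs.2
      -- HasDerivAt for each summand
      have hΨd : HasDerivAt (Psi d a) (deriv (Psi d a) t) t :=
        ((hasDerivAt_Psi hd ha ht').differentiableAt).hasDerivAt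
      have hterm : ∀ i ∈ Finset.range (k+1),
          HasDerivAt (fun s => β i s * iteratedDeriv i g (Psi d a s))
            (deriv (β i) t * iteratedDeriv i g (Psi d a t) +
              β i t * (iteratedDeriv (i+1) g (Psi d a t) * deriv (Psi d a) t)) t := by
        intro i hi
        rw [Finset.mem_range] at hi
        have hβd : HasDerivAt (β i) (deriv (β i) t) t := by
          have : DifferentiableAt ℝ (β i) t :=
            ((hsm i).differentiableOn (by simp)).differentiableAt
              (Ioi_mem_nhds ht')
          exact this.hasDerivAt
        have hGd : HasDerivAt (iteratedDeriv i g) (iteratedDeriv (i+1) g (Psi d a t))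
            (Psi d a t) := by
          have h1 : DifferentiableAt ℝ (iteratedDeriv i g) (Psi d a t) := hgt i hi
          have h2 := h1.hasDerivAt
          rwa [show iteratedDeriv (i+1) g = deriv (iteratedDeriv i g) from
            iteratedDeriv_succ]
        have hcomp := hGd.comp t hΨd
        exact hβd.mul hcomp
      have hF : HasDerivAt F
          (∑ i ∈ Finset.range (k+1),
            (deriv (β i) t * iteratedDeriv i g (Psi d a t) +
              β i t * (iteratedDeriv (i+1) g (Psi d a t) * deriv (Psi d a) t))) t :=
        HasDerivAt.fun_sum hterm
      have hdiffk : DifferentiableAt ℝ (iteratedDeriv k (rho d a g)) t :=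
        heq.differentiableAt_iff.mpr hF.differentiableAt
      constructor
      · intro i hi
        rcases Nat.lt_succ_iff_lt_or_eq.mp hi with hi' | hi'
        · exact hP.1 i hi'
        · rw [hi']; exact hdiffk
      · rw [iteratedDeriv_succ, heq.deriv_eq, hF.deriv]
        have hA : deriv (β (k+1)) t = 0 := by
          rw [hz (k+1) (by omega)]; exact deriv_const t 0
        have := sum_shift_aux k (fun i => deriv (β i) t)
          (fun i => β i t * deriv (Psi d a) t)
          (fun i => iteratedDeriv i g (Psi d a t)) hA
        calc ∑ i ∈ Finset.range (k+1),
              (deriv (β i) t * iteratedDeriv i g (Psi d a t) +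
                β i t * (iteratedDeriv (i+1) g (Psi d a t) * deriv (Psi d a) t))
            = ∑ i ∈ Finset.range (k+1),
              (deriv (β i) t * iteratedDeriv i g (Psi d a t) +
                (β i t * deriv (Psi d a) t) * iteratedDeriv (i+1) g (Psi d a t)) :=
              Finset.sum_congr rfl fun i _ => by ring
          _ = ∑ i ∈ Finset.range (k+2),
              (deriv (β i) t + if i = 0 then 0
                else (β (i-1) t * deriv (Psi d a) t)) * iteratedDeriv i g (Psi d a t) := this
          _ = ∑ i ∈ Finset.range (k+2),
              (deriv (β i) t + if i = 0 then 0
                else β (i-1) t * deriv (Psi d a) t) * iteratedDeriv i g (Psi d a t) := rfl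

/-- the `k`-th derivative of `ρ_a` at `ψ_a(ξ)` is a linear combination
`Σ_{i=0}^{k} α_{i,k}(ξ)·g^{(i)}(ξ)` whose coefficients do not depend on `g`, and with
leading coefficient `α_{k,k}(ξ) ≠ 0`. -/
theorem rho_deriv_decomposition (k d : ℕ) (hd : 2 ≤ d) (a : ℝ) (ha : 0 < a)
    (ξ : ℝ) (hξ : 0 < ξ) :
    ∃ α : Fin (k + 1) → ℝ, α (Fin.last k) ≠ 0 ∧
      ∀ g : ℝ → ℝ,
        (∀ᶠ x in nhds ξ, ∀ i < k, DifferentiableAt ℝ (iteratedDeriv i g) x) →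
        ((∀ i < k, DifferentiableAt ℝ (iteratedDeriv i (rho d a g)) (psi d a ξ)) ∧
          iteratedDeriv k (rho d a g) (psi d a ξ) =
            ∑ i : Fin (k + 1), α i * iteratedDeriv i g ξ) := by
  obtain ⟨β, _, _, hne, hmain⟩ := rho_claim d hd a ha ξ hξ k
  refine ⟨fun i => β i (psi d a ξ), by simpa using hne, fun g hg => ?_⟩
  have h := (hmain g hg).self_of_nhds
  refine ⟨h.1, ?_⟩
  rw [h.2, Psi_psi hd ha hξ, Fin.sum_univ_eq_sum_range (fun i => β i (psi d a ξ) * iteratedDeriv i g ξ)]
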